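/- Let Δ ⊆ [n] be a set of positive integers with 1 ∈ Δ, and Γ_3 = Δ ∩ [4,n]. With d(Δ,t) defined as in the context, for all t ≥ 1 we have d(Δ,t) ≤ d(Γ_3, t) + 1. -/

import Mathlib

/-- Group a sorted list of naturals into maximal runs of consecutive integers
(the maximal block decomposition). -/
def runs : List ℕ → List (List ℕ)
  | [] => []
  | x :: xs =>
    match runs xs with
    | (y :: ys) :: rest => if x + 1 = y then (x :: y :: ys) :: rest else [x] :: (y :: ys) :: rest
    | l => [x] :: l

/-- For each maximal block, record (min, max, cardinality mod 3). -/
def blockData (l : List ℕ) : List (ℕ × ℕ × ℕ) :=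
  (runs l).map (fun b => (b.headI, (b.getLast?).getD 0, b.length % 3))

/-- Fold over the list of blocks, grouping consecutive gluable type-1/type-2 blocks into
maximal extended blocks; the state `(t, s)` counts type-1/type-2 blocks of the current
extended block and `prev` records the max of the previous block if it can be glued onto.
Each finished extended block with `t` type-1 and `s` type-2 blocks contributes
`t % 2` to `a` and `s + (t - t % 2) / 2` to `b`; the result is `(a, b)`. -/
def go : List (ℕ × ℕ × ℕ) → ℕ → ℕ → Option ℕ → ℕ × ℕ
  | [], t, s, _ => (t % 2, s + (t - t % 2) / 2)
  | (m, mx, ty) :: rest, t, s, prev =>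
    if ty = 0 then
      let r := go rest 0 0 none
      (r.1 + t % 2, r.2 + s + (t - t % 2) / 2)
    else if prev = some (m - 2) ∧ 2 ≤ m then
      go rest (t + if ty = 1 then 1 else 0) (s + if ty = 2 then 1 else 0) (some mx)
    else
      let r := go rest (if ty = 1 then 1 else 0) (if ty = 2 then 1 else 0) (some mx)
      (r.1 + t % 2, r.2 + s + (t - t % 2) / 2)

lemma runs_head (x : ℕ) (xs : List ℕ) : ∃ u r, runs (x :: xs) = (x :: u) :: r := by
  rw [runs]
  rcases hr : runs xs with _ | ⟨_ | ⟨y, ys⟩, rest⟩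
  · exact ⟨[], [], rfl⟩
  · exact ⟨[], _, rfl⟩
  · by_cases h : x + 1 = y
    · exact ⟨y :: ys, rest, by simp [h]⟩
    · exact ⟨[], (y :: ys) :: rest, by simp [h]⟩

lemma runs_sep (x : ℕ) (xs : List ℕ) (h : ∀ y ∈ xs.head?, x + 1 ≠ y) :
    runs (x :: xs) = [x] :: runs xs := by
  cases xs with
  | nil => rfl
  | cons y ys =>
    obtain ⟨u, r, hr⟩ := runs_head y ys
    rw [runs, hr]
    simp [h y (by simp)]

lemma runs_glue {y : ℕ} {xs : List ℕ} {u : List ℕ} {r : List (List ℕ)}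
    (h : runs xs = (y :: u) :: r) (x : ℕ) (hxy : x + 1 = y) :
    runs (x :: xs) = (x :: y :: u) :: r := by
  rw [runs, h]; simp [hxy]

lemma runs_join : ∀ l : List ℕ, (runs l).flatten = l
  | [] => rfl
  | x :: xs => by
    have ih := runs_join xs
    rw [runs]
    rcases hr : runs xs with _ | ⟨_ | ⟨y, ys⟩, rest⟩
    · simp_all
    · simp_all
    · by_cases h : x + 1 = y <;> simp_all

lemma runs_ne_nil : ∀ l : List ℕ, ∀ b ∈ runs l, b ≠ []
  | [] => by simp [runs]
  | x :: xs => by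
    have ih := runs_ne_nil xs
    rw [runs]
    rcases hr : runs xs with _ | ⟨_ | ⟨y, ys⟩, rest⟩
    · simp_all
    · simp_all
    · by_cases h : x + 1 = y <;> simp_all


lemma go_zero (l : List (ℕ × ℕ × ℕ)) (p : Option ℕ) : go l 0 0 p = go l 0 0 none := by
  cases l with
  | nil => rfl
  | cons e rest =>
    obtain ⟨m, mx, ty⟩ := e
    have hn : ¬((none : Option ℕ) = some (m - 2) ∧ 2 ≤ m) := by simp
    by_cases h0 : ty = 0
    · rw [go, go]; simp [h0]
    · by_cases hg : p = some (m - 2) ∧ 2 ≤ m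
      · rw [go, go]
        simp only [if_neg h0, if_pos hg, if_neg hn]
        refine Prod.ext ?_ ?_ <;> simp
      · rw [go, go]
        simp only [if_neg h0, if_neg hg, if_neg hn]

lemma go_t2 : ∀ (l : List (ℕ × ℕ × ℕ)) (t s : ℕ) (p : Option ℕ),
    go l (t + 2) s p = ((go l t s p).1, (go l t s p).2 + 1)
  | [], t, s, p => by
    rw [go, go]
    refine Prod.ext ?_ ?_ <;> simp <;> omega
  | (m, mx, ty) :: rest, t, s, p => by
    by_cases h0 : ty = 0
    · rw [go, go]
      simp only [if_pos h0]
      refine Prod.ext ?_ ?_ <;> simp <;> omega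
    · by_cases hg : p = some (m - 2) ∧ 2 ≤ m
      · rw [go, go]
        simp only [if_neg h0, if_pos hg]
        rw [Nat.add_right_comm t 2]
        exact go_t2 rest _ _ _
      · rw [go, go]
        simp only [if_neg h0, if_neg hg]
        refine Prod.ext ?_ ?_ <;> simp <;> omega

lemma go_s1 : ∀ (l : List (ℕ × ℕ × ℕ)) (t s : ℕ) (p : Option ℕ),
    go l t (s + 1) p = ((go l t s p).1, (go l t s p).2 + 1)
  | [], t, s, p => by
    rw [go, go]
    refine Prod.ext ?_ ?_ <;> simp <;> omega
  | (m, mx, ty) :: rest, t, s, p => by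
    by_cases h0 : ty = 0
    · rw [go, go]
      simp only [if_pos h0]
      refine Prod.ext ?_ ?_ <;> simp <;> omega
    · by_cases hg : p = some (m - 2) ∧ 2 ≤ m
      · rw [go, go]
        simp only [if_neg h0, if_pos hg]
        rw [Nat.add_right_comm s 1]
        exact go_s1 rest _ _ _
      · rw [go, go]
        simp only [if_neg h0, if_neg hg]
        refine Prod.ext ?_ ?_ <;> simp <;> omega

lemma go_noglue (l : List (ℕ × ℕ × ℕ)) (t s : ℕ) (p : Option ℕ)
    (h : ∀ m mx ty rest, l = (m, mx, ty) :: rest → ¬(p = some (m - 2) ∧ 2 ≤ m)) :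
    go l t s p = ((go l 0 0 none).1 + t % 2, (go l 0 0 none).2 + s + (t - t % 2) / 2) := by
  cases l with
  | nil =>
    rw [go, go]
    refine Prod.ext ?_ ?_ <;> simp
  | cons e rest =>
    obtain ⟨m, mx, ty⟩ := e
    have hg := h m mx ty rest rfl
    have hn : ¬((none : Option ℕ) = some (m - 2) ∧ 2 ≤ m) := by simp
    by_cases h0 : ty = 0
    · rw [go, go]
      simp only [if_pos h0]
      refine Prod.ext ?_ ?_ <;> simp
    · rw [go, go]
      simp only [if_neg h0, if_neg hg, if_neg hn]
      refine Prod.ext ?_ ?_ <;> simp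



lemma go40 (l : List (ℕ × ℕ × ℕ)) (M : ℕ) :
    go ((4, M, 0) :: l) 0 0 none = go l 0 0 none := by
  rw [go]; norm_num

lemma goCase1 (l : List (ℕ × ℕ × ℕ)) (h : ∀ m mx ty rest, l = (m, mx, ty) :: rest → m ≠ 3) :
    go ((1, 1, 1) :: l) 0 0 none = ((go l 0 0 none).1 + 1, (go l 0 0 none).2) := by
  rw [go]
  norm_num
  rw [go_noglue l 1 0 (some 1) (by
    rintro m mx ty rest hl ⟨hg1, hg2⟩
    have : (1:ℕ) = m - 2 := by injection hg1
    exact h m mx ty rest hl (by omega))]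
  refine Prod.ext ?_ ?_ <;> simp

lemma goCase12 (l : List (ℕ × ℕ × ℕ)) :
    go ((1, 2, 2) :: l) 0 0 none = ((go l 0 0 none).1, (go l 0 0 none).2 + 1) := by
  rw [go]
  norm_num
  rw [show (1:ℕ) = 0 + 1 by omega, go_s1, go_zero]

lemma go31 (l : List (ℕ × ℕ × ℕ)) (M : ℕ) :
    go ((3, M, 1) :: l) 1 0 (some 1) = ((go l 0 0 none).1, (go l 0 0 none).2 + 1) := by
  rw [go]
  norm_num
  rw [show (2:ℕ) = 0 + 2 by omega, go_t2, go_zero]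

lemma goCase13sep (l : List (ℕ × ℕ × ℕ)) :
    go ((1, 1, 1) :: (3, 3, 1) :: l) 0 0 none
      = ((go l 0 0 none).1, (go l 0 0 none).2 + 1) := by
  rw [go]
  norm_num
  rw [go31]

lemma goCase13m0 (l : List (ℕ × ℕ × ℕ)) (M : ℕ) :
    go ((1, 1, 1) :: (3, M, 1) :: l) 0 0 none
      = ((go ((4, M, 0) :: l) 0 0 none).1, (go ((4, M, 0) :: l) 0 0 none).2 + 1) := by
  rw [go40]
  rw [go]
  norm_num
  rw [go31]

lemma goCase13m1 (l : List (ℕ × ℕ × ℕ)) (M : ℕ) :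
    go ((1, 1, 1) :: (3, M, 2) :: l) 0 0 none
      = ((go ((4, M, 1) :: l) 0 0 none).1, (go ((4, M, 1) :: l) 0 0 none).2 + 1) := by
  have h1 : go ((3, M, 2) :: l) 1 0 (some 1) = go l 1 1 (some M) := by
    rw [go]; norm_num
  have h2 : go ((4, M, 1) :: l) 0 0 none = go l 1 0 (some M) := by
    rw [go]; norm_num
  rw [go]
  norm_num
  rw [h1, h2, show (1:ℕ) = 0 + 1 by omega, go_s1]

lemma goCase13m2a (l : List (ℕ × ℕ × ℕ)) (M : ℕ) :
    go ((1, 1, 1) :: (3, M, 0) :: l) 0 0 none = ((go l 0 0 none).1 + 1, (go l 0 0 none).2) := by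
  rw [go]
  norm_num
  rw [go]
  norm_num

lemma goCase13m2b (l : List (ℕ × ℕ × ℕ)) (M : ℕ) :
    go ((4, M, 2) :: l) 0 0 none = ((go l 0 0 none).1, (go l 0 0 none).2 + 1) := by
  rw [go]
  norm_num
  rw [show (1:ℕ) = 0 + 1 by omega, go_s1, go_zero]

lemma goHeadMin (l : List (ℕ × ℕ × ℕ)) (m m' mx ty : ℕ) :
    go ((m, mx, ty) :: l) 0 0 none = go ((m', mx, ty) :: l) 0 0 none := by
  have hn : ∀ k : ℕ, ¬((none : Option ℕ) = some (k - 2) ∧ 2 ≤ k) := by simp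
  rw [go, go]
  by_cases h0 : ty = 0
  · simp [h0]
  · simp only [if_neg h0, if_neg (hn m), if_neg (hn m')]

lemma goCase123sep (l : List (ℕ × ℕ × ℕ)) :
    go ((1, 3, 0) :: l) 0 0 none = go l 0 0 none := by
  rw [go]
  norm_num


lemma go_val : ∀ (l : List (ℕ × ℕ × ℕ)) (t s : ℕ) (p : Option ℕ),
    (∀ e ∈ l, e.2.2 < 3) →
    (go l t s p).1 + 2 * (go l t s p).2 ≤
      t + 2 * s + (l.map (fun e => if e.2.2 = 0 then 3 else e.2.2)).sum ∧
    ((go l t s p).1 + 2 * (go l t s p).2) % 3 =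
      (t + 2 * s + (l.map (fun e => if e.2.2 = 0 then 3 else e.2.2)).sum) % 3
  | [], t, s, p, _ => by rw [go]; simp; omega
  | (m, mx, ty) :: rest, t, s, p, h => by
    have hty : ty < 3 := h (m, mx, ty) (List.mem_cons_self)
    have hrest : ∀ e ∈ rest, e.2.2 < 3 := fun e he => h e (by simp [he])
    simp only [List.map_cons, List.sum_cons]
    by_cases h0 : ty = 0
    · have ih := go_val rest 0 0 none hrest
      rw [go, if_pos h0]
      subst h0
      refine ⟨?_, ?_⟩ <;> simp <;> omega
    · by_cases hg : p = some (m - 2) ∧ 2 ≤ m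
      · have hty12 : ty = 1 ∨ ty = 2 := by omega
        rcases hty12 with rfl | rfl
        · have ih := go_val rest (t + 1) s (some mx) hrest
          rw [go, if_neg h0, if_pos hg]
          norm_num
          refine ⟨?_, ?_⟩ <;> omega
        · have ih := go_val rest t (s + 1) (some mx) hrest
          rw [go, if_neg h0, if_pos hg]
          norm_num
          refine ⟨?_, ?_⟩ <;> omega
      · have hty12 : ty = 1 ∨ ty = 2 := by omega
        rcases hty12 with rfl | rfl
        · have ih := go_val rest 1 0 (some mx) hrest
          rw [go, if_neg h0, if_neg hg]
          norm_num
          refine ⟨?_, ?_⟩ <;> omega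
        · have ih := go_val rest 0 1 (some mx) hrest
          rw [go, if_neg h0, if_neg hg]
          norm_num
          refine ⟨?_, ?_⟩ <;> omega

lemma wsum_le : ∀ (bs : List (List ℕ)), (∀ b ∈ bs, b ≠ []) →
    (bs.map (fun b => if b.length % 3 = 0 then 3 else b.length % 3)).sum ≤ bs.flatten.length ∧
    (bs.map (fun b => if b.length % 3 = 0 then 3 else b.length % 3)).sum % 3
      = bs.flatten.length % 3
  | [], _ => by simp
  | b :: bs, h => by
    have hb : b ≠ [] := h b (by simp)
    have hlen : 1 ≤ b.length := by
      cases b with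
      | nil => exact absurd rfl hb
      | cons x xs => simp
    have ih := wsum_le bs (fun b hb => h b (by simp [hb]))
    rw [show (b :: bs).flatten = b ++ bs.flatten from rfl]
    simp only [List.map_cons, List.sum_cons, List.length_append]
    by_cases h3 : b.length % 3 = 0
    · simp only [if_pos h3]; omega
    · simp only [if_neg h3]; omega



/-- The invariant `a(Δ)`. -/
def aF (Δ : Finset ℕ) : ℕ := (go (blockData (Δ.sort (· ≤ ·))) 0 0 none).1

/-- The invariant `b(Δ)`. -/
def bF (Δ : Finset ℕ) : ℕ := (go (blockData (Δ.sort (· ≤ ·))) 0 0 none).2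

/-- The invariant `c(Δ) = (|Δ| - a(Δ) - 2 b(Δ)) / 3`. -/
def cF (Δ : Finset ℕ) : ℕ := (Δ.card - aF Δ - 2 * bF Δ) / 3

/-- The invariant `k(Δ) = a(Δ) + b(Δ) + c(Δ)`. -/
def kF (Δ : Finset ℕ) : ℕ := aF Δ + bF Δ + cF Δ

/-- The piecewise function `d(Δ, t)` of the paper. -/
def dF (Δ : Finset ℕ) (t : ℕ) : ℕ :=
  if t ≤ aF Δ then kF Δ + 2 - t
  else if t ≤ aF Δ + 2 * bF Δ then kF Δ + 1 - (t + aF Δ - 1) / 2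
  else if t ≤ Δ.card then kF Δ + 1 - (t + 2 * aF Δ + bF Δ - 1) / 3
  else 1

lemma exists_c (S : Finset ℕ) : ∃ c, S.card = aF S + 2 * bF S + 3 * c := by
  have hmap : (blockData (S.sort (· ≤ ·))).map (fun e => if e.2.2 = 0 then 3 else e.2.2)
      = (runs (S.sort (· ≤ ·))).map
          (fun b => if b.length % 3 = 0 then 3 else b.length % 3) := by
    simp only [blockData, List.map_map]
    rfl
  have h3 : ∀ e ∈ blockData (S.sort (· ≤ ·)), e.2.2 < 3 := by
    intro e he
    simp only [blockData, List.mem_map] at he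
    obtain ⟨b, _, rfl⟩ := he
    simp only []
    omega
  have hv := go_val (blockData (S.sort (· ≤ ·))) 0 0 none h3
  have hw := wsum_le (runs (S.sort (· ≤ ·))) (runs_ne_nil _)
  have hj : (runs (S.sort (· ≤ ·))).flatten = S.sort (· ≤ ·) := runs_join _
  have hlen : (S.sort (· ≤ ·)).length = S.card := Finset.length_sort (· ≤ ·)
  rw [hmap] at hv
  rw [hj, hlen] at hw
  refine ⟨(S.card - aF S - 2 * bF S) / 3, ?_⟩
  have h1 := hv.1
  have h2 := hv.2
  have h4 := hw.1
  have h5 := hw.2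
  unfold aF bF
  omega

lemma sort_split (S : Finset ℕ) :
    S.sort (· ≤ ·) = ((S.filter (fun x => x ≤ 3)).sort (· ≤ ·))
      ++ ((S.filter (fun x => ¬ x ≤ 3)).sort (· ≤ ·)) := by
  refine (fun h1 h2 h3 => List.Perm.eq_of_pairwise' h2 h3 h1) ?_ (Finset.pairwise_sort _ _) ?_
  · rw [← Multiset.coe_eq_coe, ← Multiset.coe_add]
    rw [Finset.sort_eq, Finset.sort_eq, Finset.sort_eq]
    rw [Finset.filter_val, Finset.filter_val]
    exact (Multiset.filter_add_not _ _).symm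
  · refine List.pairwise_append.2 ⟨Finset.pairwise_sort _ _, Finset.pairwise_sort _ _, ?_⟩
    intro a ha b hb
    rw [Finset.mem_sort] at ha hb
    have h1 := (Finset.mem_filter.1 ha).2
    have h2 := (Finset.mem_filter.1 hb).2
    omega

lemma key (Δ Γ : Finset ℕ) (t : ℕ) (ht : 1 ≤ t)
    (h : (aF Δ = aF Γ + 1 ∧ bF Δ = bF Γ ∧ Δ.card = Γ.card + 1) ∨
         (aF Δ = aF Γ ∧ bF Δ = bF Γ + 1 ∧ Δ.card = Γ.card + 2) ∨
         (aF Δ = aF Γ + 1 ∧ bF Γ = bF Δ + 1 ∧ Δ.card = Γ.card + 2) ∨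
         (aF Δ = aF Γ ∧ bF Δ = bF Γ ∧ Δ.card = Γ.card + 3)) :
    dF Δ t ≤ dF Γ t + 1 := by
  obtain ⟨c, hc⟩ := exists_c Γ
  rcases h with ⟨h1, h2, h3⟩ | ⟨h1, h2, h3⟩ | ⟨h1, h2, h3⟩ | ⟨h1, h2, h3⟩ <;>
    (simp only [dF, kF, cF]; split_ifs <;> omega)


theorem d_gamma3 {n : ℕ} (Δ : Finset ℕ) (hsub : Δ ⊆ Finset.Icc 1 n) (h1 : 1 ∈ Δ) :
    ∀ t, 1 ≤ t → dF Δ t ≤ dF (Δ ∩ Finset.Icc 4 n) t + 1 := by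
  intro t ht
  set Γ := Δ ∩ Finset.Icc 4 n with hΓdef
  have hΓfilter : Γ = Δ.filter (fun x => ¬ x ≤ 3) := by
    ext x
    simp only [hΓdef, Finset.mem_inter, Finset.mem_filter, Finset.mem_Icc]
    constructor
    · rintro ⟨hx, h4, _⟩; exact ⟨hx, by omega⟩
    · rintro ⟨hx, h4⟩
      have := Finset.mem_Icc.1 (hsub hx)
      exact ⟨hx, by omega, this.2⟩
  have hG4 : ∀ g ∈ Γ.sort (· ≤ ·), 4 ≤ g := by
    intro g hg
    rw [Finset.mem_sort, hΓfilter, Finset.mem_filter] at hg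
    omega
  have hheadbig : ∀ y ∈ (Γ.sort (· ≤ ·)).head?, 4 ≤ y := by
    intro y hy
    cases hGl : Γ.sort (· ≤ ·) with
    | nil => rw [hGl] at hy; simp at hy
    | cons g G' =>
      rw [hGl] at hy
      simp only [List.head?_cons, Option.mem_def, Option.some.injEq] at hy
      subst hy
      exact hG4 _ (by rw [hGl]; exact List.mem_cons_self)
  have hsplit := sort_split Δ
  rw [← hΓfilter] at hsplit
  have hcardΓ : (Γ.sort (· ≤ ·)).length = Γ.card := Finset.length_sort (· ≤ ·)
  have hcardΔ : (Δ.sort (· ≤ ·)).length = Δ.card := Finset.length_sort (· ≤ ·)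
  have hlen : ∀ P : List ℕ, Δ.sort (· ≤ ·) = P ++ Γ.sort (· ≤ ·) →
      Δ.card = Γ.card + P.length := by
    intro P hP
    rw [← hcardΔ, ← hcardΓ, hP, List.length_append]
    omega
  have hprefix : ∀ P : List ℕ, P.Nodup → P.Pairwise (· ≤ ·) →
      (∀ x, x ∈ P ↔ (x ∈ Δ ∧ x ≤ 3)) →
      (Δ.filter (fun x => x ≤ 3)).sort (· ≤ ·) = P := by
    intro P hnd hsorted hmem
    have : Δ.filter (fun x => x ≤ 3) = P.toFinset := by
      ext x
      rw [Finset.mem_filter, List.mem_toFinset, hmem]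
    rw [this]
    exact (List.toFinset_sort _ hnd).2 hsorted
  have hx13 : ∀ x ∈ Δ, x ≤ 3 → x = 1 ∨ x = 2 ∨ x = 3 := by
    intro x hx hx3
    have := (Finset.mem_Icc.1 (hsub hx)).1
    omega
  by_cases h2 : 2 ∈ Δ <;> by_cases h3 : 3 ∈ Δ
  · -- prefix {1,2,3}
    have hsortA : (Δ.filter (fun x => x ≤ 3)).sort (· ≤ ·) = [1, 2, 3] := by
      refine hprefix _ (by decide) (by decide) ?_
      intro x
      simp only [List.mem_cons, List.mem_singleton, List.not_mem_nil, or_false]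
      constructor
      · rintro (rfl | rfl | rfl)
        · exact ⟨h1, by norm_num⟩
        · exact ⟨h2, by norm_num⟩
        · exact ⟨h3, by norm_num⟩
      · rintro ⟨hx, hx3⟩; exact hx13 x hx hx3
    have hP : Δ.sort (· ≤ ·) = 1 :: 2 :: 3 :: Γ.sort (· ≤ ·) := by
      rw [hsplit, hsortA]; rfl
    have hcard : Δ.card = Γ.card + 3 := hlen [1, 2, 3] hP
    by_cases hh4 : (Γ.sort (· ≤ ·)).head? = some 4
    · obtain ⟨G', hGl⟩ : ∃ G', Γ.sort (· ≤ ·) = 4 :: G' := by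
        cases hGl : Γ.sort (· ≤ ·) with
        | nil => rw [hGl] at hh4; simp at hh4
        | cons g G' =>
          rw [hGl] at hh4
          simp only [List.head?_cons, Option.some.injEq] at hh4
          exact ⟨G', by rw [hh4]⟩
      obtain ⟨u, r, hr⟩ := runs_head 4 G'
      have hr3 : runs (3 :: 4 :: G') = (3 :: 4 :: u) :: r := runs_glue hr 3 rfl
      have hr2 : runs (2 :: 3 :: 4 :: G') = (2 :: 3 :: 4 :: u) :: r := runs_glue hr3 2 rfl
      have hr1 : runs (1 :: 2 :: 3 :: 4 :: G') = (1 :: 2 :: 3 :: 4 :: u) :: r :=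
        runs_glue hr2 1 rfl
      have hbdΔ : blockData (Δ.sort (· ≤ ·))
          = (1, ((4 :: u).getLast?).getD 0, (u.length + 1) % 3)
            :: r.map (fun b => (b.headI, (b.getLast?).getD 0, b.length % 3)) := by
        rw [hP, hGl]
        unfold blockData
        rw [hr1]
        simp only [List.map_cons, List.length_cons]
        refine congrArg₂ _ ?_ rfl
        refine congrArg₂ _ rfl (congrArg₂ _ rfl ?_)
        omega
      have hbdΓ : blockData (Γ.sort (· ≤ ·))
          = (4, ((4 :: u).getLast?).getD 0, (u.length + 1) % 3)
            :: r.map (fun b => (b.headI, (b.getLast?).getD 0, b.length % 3)) := by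
        rw [hGl]
        unfold blockData
        rw [hr]
        simp only [List.map_cons, List.length_cons]
        rfl
      have hgo := goHeadMin
        (r.map (fun b => (b.headI, (b.getLast?).getD 0, b.length % 3))) 1 4
        (((4 :: u).getLast?).getD 0) ((u.length + 1) % 3)
      refine key Δ Γ t ht (Or.inr (Or.inr (Or.inr ⟨?_, ?_, hcard⟩)))
      · unfold aF; rw [hbdΔ, hbdΓ, hgo]
      · unfold bF; rw [hbdΔ, hbdΓ, hgo]
    · have hr3 : runs (3 :: Γ.sort (· ≤ ·)) = [3] :: runs (Γ.sort (· ≤ ·)) := by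
        refine runs_sep 3 _ ?_
        intro y hy
        have h4y := hheadbig y hy
        rw [Option.mem_def] at hy
        intro hc
        have hy4 : y = 4 := by omega
        exact hh4 (by rw [hy, hy4])
      have hr2 : runs (2 :: 3 :: Γ.sort (· ≤ ·)) = [2, 3] :: runs (Γ.sort (· ≤ ·)) :=
        runs_glue hr3 2 rfl
      have hr1 : runs (1 :: 2 :: 3 :: Γ.sort (· ≤ ·)) = [1, 2, 3] :: runs (Γ.sort (· ≤ ·)) :=
        runs_glue hr2 1 rfl
      have hbdΔ : blockData (Δ.sort (· ≤ ·))
          = (1, 3, 0) :: blockData (Γ.sort (· ≤ ·)) := by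
        rw [hP]
        unfold blockData
        rw [hr1]
        rfl
      have hgo := goCase123sep (blockData (Γ.sort (· ≤ ·)))
      refine key Δ Γ t ht (Or.inr (Or.inr (Or.inr ⟨?_, ?_, hcard⟩)))
      · unfold aF; rw [hbdΔ, hgo]
      · unfold bF; rw [hbdΔ, hgo]
  · -- prefix {1,2}
    have hsortA : (Δ.filter (fun x => x ≤ 3)).sort (· ≤ ·) = [1, 2] := by
      refine hprefix _ (by decide) (by decide) ?_
      intro x
      simp only [List.mem_cons, List.mem_singleton, List.not_mem_nil, or_false]
      constructor
      · rintro (rfl | rfl)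
        · exact ⟨h1, by norm_num⟩
        · exact ⟨h2, by norm_num⟩
      · rintro ⟨hx, hx3⟩
        rcases hx13 x hx hx3 with rfl | rfl | rfl
        · exact Or.inl rfl
        · exact Or.inr rfl
        · exact absurd hx h3
    have hP : Δ.sort (· ≤ ·) = 1 :: 2 :: Γ.sort (· ≤ ·) := by
      rw [hsplit, hsortA]; rfl
    have hcard : Δ.card = Γ.card + 2 := hlen [1, 2] hP
    have hr2 : runs (2 :: Γ.sort (· ≤ ·)) = [2] :: runs (Γ.sort (· ≤ ·)) := by
      refine runs_sep 2 _ ?_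
      intro y hy
      have := hheadbig y hy
      omega
    have hr1 : runs (1 :: 2 :: Γ.sort (· ≤ ·)) = [1, 2] :: runs (Γ.sort (· ≤ ·)) :=
      runs_glue hr2 1 rfl
    have hbdΔ : blockData (Δ.sort (· ≤ ·)) = (1, 2, 2) :: blockData (Γ.sort (· ≤ ·)) := by
      rw [hP]
      unfold blockData
      rw [hr1]
      rfl
    have hgo := goCase12 (blockData (Γ.sort (· ≤ ·)))
    refine key Δ Γ t ht (Or.inr (Or.inl ⟨?_, ?_, hcard⟩))
    · unfold aF; rw [hbdΔ, hgo]
    · unfold bF; rw [hbdΔ, hgo]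
  · -- prefix {1,3}
    have hsortA : (Δ.filter (fun x => x ≤ 3)).sort (· ≤ ·) = [1, 3] := by
      refine hprefix _ (by decide) (by decide) ?_
      intro x
      simp only [List.mem_cons, List.mem_singleton, List.not_mem_nil, or_false]
      constructor
      · rintro (rfl | rfl)
        · exact ⟨h1, by norm_num⟩
        · exact ⟨h3, by norm_num⟩
      · rintro ⟨hx, hx3⟩
        rcases hx13 x hx hx3 with rfl | rfl | rfl
        · exact Or.inl rfl
        · exact absurd hx h2
        · exact Or.inr rfl
    have hP : Δ.sort (· ≤ ·) = 1 :: 3 :: Γ.sort (· ≤ ·) := by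
      rw [hsplit, hsortA]; rfl
    have hcard : Δ.card = Γ.card + 2 := hlen [1, 3] hP
    by_cases hh4 : (Γ.sort (· ≤ ·)).head? = some 4
    · obtain ⟨G', hGl⟩ : ∃ G', Γ.sort (· ≤ ·) = 4 :: G' := by
        cases hGl : Γ.sort (· ≤ ·) with
        | nil => rw [hGl] at hh4; simp at hh4
        | cons g G' =>
          rw [hGl] at hh4
          simp only [List.head?_cons, Option.some.injEq] at hh4
          exact ⟨G', by rw [hh4]⟩
      obtain ⟨u, r, hr⟩ := runs_head 4 G'
      have hr3 : runs (3 :: 4 :: G') = (3 :: 4 :: u) :: r := runs_glue hr 3 rfl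
      have hr1 : runs (1 :: 3 :: 4 :: G') = [1] :: (3 :: 4 :: u) :: r := by
        rw [runs_sep 1 _ (by
          intro y hy
          simp only [List.head?_cons, Option.mem_def, Option.some.injEq] at hy
          omega), hr3]
      have hbdΔ : blockData (Δ.sort (· ≤ ·))
          = (1, 1, 1) :: (3, ((4 :: u).getLast?).getD 0, (u.length + 2) % 3)
            :: r.map (fun b => (b.headI, (b.getLast?).getD 0, b.length % 3)) := by
        rw [hP, hGl]
        unfold blockData
        rw [hr1]
        simp only [List.map_cons, List.length_cons]
        refine congrArg₂ _ rfl (congrArg₂ _ ?_ rfl)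
        refine congrArg₂ _ rfl (congrArg₂ _ rfl ?_)
        omega
      have hbdΓ : blockData (Γ.sort (· ≤ ·))
          = (4, ((4 :: u).getLast?).getD 0, (u.length + 1) % 3)
            :: r.map (fun b => (b.headI, (b.getLast?).getD 0, b.length % 3)) := by
        rw [hGl]
        unfold blockData
        rw [hr]
        simp only [List.map_cons, List.length_cons]
        rfl
      have hmod : (u.length + 1) % 3 = 0 ∨ (u.length + 1) % 3 = 1 ∨ (u.length + 1) % 3 = 2 := by
        omega
      rcases hmod with hm | hm | hm
      · have hm2 : (u.length + 2) % 3 = 1 := by omega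
        rw [hm2] at hbdΔ
        rw [hm] at hbdΓ
        have hgo := goCase13m0
          (r.map (fun b => (b.headI, (b.getLast?).getD 0, b.length % 3)))
          (((4 :: u).getLast?).getD 0)
        refine key Δ Γ t ht (Or.inr (Or.inl ⟨?_, ?_, hcard⟩))
        · unfold aF; rw [hbdΔ, hbdΓ, hgo]
        · unfold bF; rw [hbdΔ, hbdΓ, hgo]
      · have hm2 : (u.length + 2) % 3 = 2 := by omega
        rw [hm2] at hbdΔ
        rw [hm] at hbdΓ
        have hgo := goCase13m1
          (r.map (fun b => (b.headI, (b.getLast?).getD 0, b.length % 3)))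
          (((4 :: u).getLast?).getD 0)
        refine key Δ Γ t ht (Or.inr (Or.inl ⟨?_, ?_, hcard⟩))
        · unfold aF; rw [hbdΔ, hbdΓ, hgo]
        · unfold bF; rw [hbdΔ, hbdΓ, hgo]
      · have hm2 : (u.length + 2) % 3 = 0 := by omega
        rw [hm2] at hbdΔ
        rw [hm] at hbdΓ
        have hgoA := goCase13m2a
          (r.map (fun b => (b.headI, (b.getLast?).getD 0, b.length % 3)))
          (((4 :: u).getLast?).getD 0)
        have hgoB := goCase13m2b
          (r.map (fun b => (b.headI, (b.getLast?).getD 0, b.length % 3)))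
          (((4 :: u).getLast?).getD 0)
        refine key Δ Γ t ht (Or.inr (Or.inr (Or.inl ⟨?_, ?_, hcard⟩)))
        · unfold aF; rw [hbdΔ, hbdΓ, hgoA, hgoB]
        · unfold bF; rw [hbdΔ, hbdΓ, hgoA, hgoB]
    · have hr3 : runs (3 :: Γ.sort (· ≤ ·)) = [3] :: runs (Γ.sort (· ≤ ·)) := by
        refine runs_sep 3 _ ?_
        intro y hy
        have h4y := hheadbig y hy
        rw [Option.mem_def] at hy
        intro hc
        have hy4 : y = 4 := by omega
        exact hh4 (by rw [hy, hy4])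
      have hr1 : runs (1 :: 3 :: Γ.sort (· ≤ ·)) = [1] :: [3] :: runs (Γ.sort (· ≤ ·)) := by
        rw [runs_sep 1 _ (by
          intro y hy
          simp only [List.head?_cons, Option.mem_def, Option.some.injEq] at hy
          omega), hr3]
      have hbdΔ : blockData (Δ.sort (· ≤ ·))
          = (1, 1, 1) :: (3, 3, 1) :: blockData (Γ.sort (· ≤ ·)) := by
        rw [hP]
        unfold blockData
        rw [hr1]
        rfl
      have hgo := goCase13sep (blockData (Γ.sort (· ≤ ·)))
      refine key Δ Γ t ht (Or.inr (Or.inl ⟨?_, ?_, hcard⟩))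
      · unfold aF; rw [hbdΔ, hgo]
      · unfold bF; rw [hbdΔ, hgo]
  · -- prefix {1}
    have hsortA : (Δ.filter (fun x => x ≤ 3)).sort (· ≤ ·) = [1] := by
      refine hprefix _ (by decide) (by decide) ?_
      intro x
      simp only [List.mem_singleton]
      constructor
      · rintro rfl; exact ⟨h1, by norm_num⟩
      · rintro ⟨hx, hx3⟩
        rcases hx13 x hx hx3 with rfl | rfl | rfl
        · rfl
        · exact absurd hx h2
        · exact absurd hx h3
    have hP : Δ.sort (· ≤ ·) = 1 :: Γ.sort (· ≤ ·) := by
      rw [hsplit, hsortA]; rfl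
    have hcard : Δ.card = Γ.card + 1 := hlen [1] hP
    have hr1 : runs (1 :: Γ.sort (· ≤ ·)) = [1] :: runs (Γ.sort (· ≤ ·)) := by
      refine runs_sep 1 _ ?_
      intro y hy
      have := hheadbig y hy
      omega
    have hbdΔ : blockData (Δ.sort (· ≤ ·)) = (1, 1, 1) :: blockData (Γ.sort (· ≤ ·)) := by
      rw [hP]
      unfold blockData
      rw [hr1]
      rfl
    have hm3 : ∀ m mx ty rest, blockData (Γ.sort (· ≤ ·)) = (m, mx, ty) :: rest → m ≠ 3 := by
      intro m mx ty rest he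
      cases hGl : Γ.sort (· ≤ ·) with
      | nil => rw [hGl] at he; simp [blockData, runs] at he
      | cons g G' =>
        obtain ⟨u, r, hr⟩ := runs_head g G'
        rw [hGl] at he
        unfold blockData at he
        rw [hr] at he
        simp only [List.map_cons, List.cons.injEq, Prod.mk.injEq, List.headI] at he
        have hg := hG4 g (by rw [hGl]; exact List.mem_cons_self)
        obtain ⟨⟨hm, -⟩, -⟩ := he
        omega
    have hgo := goCase1 (blockData (Γ.sort (· ≤ ·))) hm3
    refine key Δ Γ t ht (Or.inl ⟨?_, ?_, hcard⟩)
    · unfold aF; rw [hbdΔ, hgo]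
    · unfold bF; rw [hbdΔ, hgo]
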